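/- Let γ ∈ (0,1] and α ≥ 0. Let s, y, u, v : (0,∞) → ℝ with s continuous and s(r) > 0 for all r, y twice differentiable with y(r) > 0 for all r, v twice differentiable, u differentiable, and r ↦ r u(r)(γ s(r)² + 4α v(r)²) differentiable. Suppose that on (0,∞) the equations (V): v'' + v'/r − v/r² + 2(2y'u + y u' + y u/r) − 4 v u² − γ v s² = 0, (U): v' y − v y' + (2y² + (γ/2) s² + 2v²) u = 0, and (I) with x ≡ 0: (r u (γ s² + 4α v²))' + 2r (4α y u²) v = 0 hold. Assume the function Φ(r) := r u v (γ s² + 4α v²)/y tends to 0 as r → 0⁺ and as r → ∞, Φ' is integrable on (0,∞), r ↦ 2r{[1 + (v² + (γ/4)s²)/y²](γ s² + 4α v²) + 4α v²} u² is integrable on (0,∞), and v(r) → 0 as r → 0⁺ and as r → ∞. Then u ≡ 0 and v ≡ 0 on (0,∞). -/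

import Mathlib

open Set Filter MeasureTheory Topology Real

/-- Maximum principle helper: a twice differentiable function on `(0,∞)` satisfying
`w'' + w'/r - w·g = 0` with `g > 0`, tending to `0` at both ends, is nonpositive. -/
private lemma aux_nonpos (g w w' w'' : ℝ → ℝ)
    (hw : ∀ r ∈ Set.Ioi (0:ℝ), HasDerivAt w (w' r) r)
    (hw' : ∀ r ∈ Set.Ioi (0:ℝ), HasDerivAt w' (w'' r) r)
    (hg : ∀ r ∈ Set.Ioi (0:ℝ), 0 < g r)
    (heq : ∀ r ∈ Set.Ioi (0:ℝ), w'' r + w' r / r - w r * g r = 0)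
    (h0 : Tendsto w (𝓝[>] (0:ℝ)) (𝓝 0))
    (hinf : Tendsto w atTop (𝓝 0)) :
    ∀ r ∈ Set.Ioi (0:ℝ), w r ≤ 0 := by
  intro r₁ hr₁
  by_contra hcon
  push_neg at hcon
  have hr₁pos : (0:ℝ) < r₁ := hr₁
  obtain ⟨a₀, ha₀, hasub⟩ := mem_nhdsGT_iff_exists_Ioo_subset.mp
    (h0.eventually_lt_const hcon)
  obtain ⟨b₀, hb₀⟩ := eventually_atTop.mp (hinf.eventually_lt_const hcon)
  have ha₀pos : (0:ℝ) < a₀ := ha₀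
  set a : ℝ := min a₀ r₁ / 2 with hadef
  have ha : 0 < a := by
    have := lt_min ha₀pos hr₁pos
    positivity
  have haa₀ : a < a₀ := by
    have h1 : min a₀ r₁ ≤ a₀ := min_le_left _ _
    have := lt_min ha₀pos hr₁pos
    simp only [hadef]; linarith
  have halt : a < r₁ := by
    have h1 : min a₀ r₁ ≤ r₁ := min_le_right _ _
    have := lt_min ha₀pos hr₁pos
    simp only [hadef]; linarith
  set b : ℝ := max b₀ (r₁ + 1) with hbdef
  have hb : r₁ < b := lt_of_lt_of_le (lt_add_one r₁) (le_max_right _ _)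
  have hwa : w a < w r₁ := hasub ⟨ha, haa₀⟩
  have hwb : w b < w r₁ := hb₀ b (le_max_left _ _)
  have hKsub : Icc a b ⊆ Ioi (0:ℝ) := fun t ht => lt_of_lt_of_le ha ht.1
  have hcont : ContinuousOn w (Icc a b) :=
    fun t ht => ((hw t (hKsub ht)).continuousAt).continuousWithinAt
  obtain ⟨r₀, hr₀K, hmax⟩ := isCompact_Icc.exists_isMaxOn
    ⟨r₁, ⟨halt.le, hb.le⟩⟩ hcont
  have hcr₀ : w r₁ ≤ w r₀ := hmax ⟨halt.le, hb.le⟩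
  have hr₀a : a < r₀ := by
    rcases lt_or_eq_of_le hr₀K.1 with h | h
    · exact h
    · exfalso
      have : w r₀ < w r₁ := by rw [← h]; exact hwa
      linarith
  have hr₀b : r₀ < b := by
    rcases lt_or_eq_of_le hr₀K.2 with h | h
    · exact h
    · exfalso
      have : w r₀ < w r₁ := by rw [h]; exact hwb
      linarith
  have hr₀pos : 0 < r₀ := ha.trans hr₀a
  have hloc : IsLocalMax w r₀ := by
    filter_upwards [isOpen_Ioo.mem_nhds ⟨hr₀a, hr₀b⟩] with t ht
    exact hmax (Ioo_subset_Icc_self ht)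
  have hw'0 : w' r₀ = 0 := hloc.hasDerivAt_eq_zero (hw r₀ hr₀pos)
  have heq0 := heq r₀ hr₀pos
  have hw''pos : 0 < w'' r₀ := by
    have h1 : w' r₀ / r₀ = 0 := by rw [hw'0]; simp
    have hgp := hg r₀ hr₀pos
    nlinarith [mul_pos (lt_of_lt_of_le hcon hcr₀) hgp]
  have hslope : Tendsto (slope w' r₀) (𝓝[≠] r₀) (𝓝 (w'' r₀)) :=
    hasDerivAt_iff_tendsto_slope.mp (hw' r₀ hr₀pos)
  have hle : 𝓝[>] r₀ ≤ 𝓝[≠] r₀ :=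
    nhdsWithin_mono r₀ (fun t ht => ne_of_gt ht)
  have hev : ∀ᶠ t in 𝓝[>] r₀, 0 < slope w' r₀ t :=
    (hslope.mono_left hle).eventually_const_lt hw''pos
  obtain ⟨m, hm, hmsub⟩ := mem_nhdsGT_iff_exists_Ioo_subset.mp hev
  have hmr₀ : r₀ < m := hm
  have hw'pos : ∀ t ∈ Ioo r₀ m, 0 < w' t := by
    intro t ht
    have hst := hmsub ht
    simp only [Set.mem_setOf_eq] at hst
    have htr : 0 < t - r₀ := sub_pos.mpr ht.1
    have hsl : slope w' r₀ t = w' t / (t - r₀) := by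
      rw [slope_def_field, hw'0]; ring
    rw [hsl] at hst
    have := mul_pos hst htr
    rwa [div_mul_cancel₀ _ (ne_of_gt htr)] at this
  set r₂ : ℝ := (r₀ + min m b) / 2 with hr₂def
  have hr₀min : r₀ < min m b := lt_min hmr₀ hr₀b
  have h12 : r₀ < r₂ := by simp only [hr₂def]; linarith
  have h2m : r₂ < m := by
    have := min_le_left m b
    simp only [hr₂def]; linarith
  have h2b : r₂ < b := by
    have := min_le_right m b
    simp only [hr₂def]; linarith
  have hI2sub : Icc r₀ r₂ ⊆ Ioi (0:ℝ) := fun t ht => lt_of_lt_of_le hr₀pos ht.1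
  have hmono : StrictMonoOn w (Icc r₀ r₂) := by
    apply strictMonoOn_of_deriv_pos (convex_Icc r₀ r₂)
    · exact fun t ht => ((hw t (hI2sub ht)).continuousAt).continuousWithinAt
    · intro x hx
      rw [interior_Icc] at hx
      rw [(hw x (hI2sub (Ioo_subset_Icc_self hx))).deriv]
      exact hw'pos x ⟨hx.1, hx.2.trans h2m⟩
  have hlt : w r₀ < w r₂ :=
    hmono ⟨le_refl _, h12.le⟩ ⟨h12.le, le_refl _⟩ h12
  have hle2 : w r₂ ≤ w r₀ := hmax ⟨(hr₀a.trans h12).le, h2b.le⟩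
  linarith

/-- The case `x ≡ 0` (arising for `γ = 1`, `m = −2n`): the integrated identity forces
`u ≡ 0`, and then the `v` equation with a maximum principle forces `v ≡ 0`. -/
theorem statement6 (γ α : ℝ) (hγ : γ ∈ Set.Ioc (0:ℝ) 1) (hα : 0 ≤ α)
    (s y u v y' y'' u' v' v'' U' : ℝ → ℝ)
    (hs : ContinuousOn s (Set.Ioi (0:ℝ)))
    (hspos : ∀ r : ℝ, 0 < r → 0 < s r)
    (hy : ∀ r ∈ Set.Ioi (0:ℝ), HasDerivAt y (y' r) r)
    (hy' : ∀ r ∈ Set.Ioi (0:ℝ), HasDerivAt y' (y'' r) r)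
    (hypos : ∀ r : ℝ, 0 < r → 0 < y r)
    (hu : ∀ r ∈ Set.Ioi (0:ℝ), HasDerivAt u (u' r) r)
    (hv : ∀ r ∈ Set.Ioi (0:ℝ), HasDerivAt v (v' r) r)
    (hv' : ∀ r ∈ Set.Ioi (0:ℝ), HasDerivAt v' (v'' r) r)
    (hUd : ∀ r ∈ Set.Ioi (0:ℝ),
      HasDerivAt (fun t => t * u t * (γ * s t ^ 2 + 4 * α * v t ^ 2)) (U' r) r)
    (hV : ∀ r ∈ Set.Ioi (0:ℝ),
      v'' r + v' r / r - v r / r ^ 2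
        + 2 * (2 * y' r * u r + y r * u' r + y r * u r / r)
        - 4 * v r * u r ^ 2 - γ * v r * s r ^ 2 = 0)
    (hU : ∀ r ∈ Set.Ioi (0:ℝ),
      v' r * y r - v r * y' r
        + (2 * y r ^ 2 + γ / 2 * s r ^ 2 + 2 * v r ^ 2) * u r = 0)
    (hI : ∀ r ∈ Set.Ioi (0:ℝ),
      U' r + 2 * r * (4 * α * y r * u r ^ 2) * v r = 0)
    (hΦ0 : Filter.Tendsto
      (fun r => r * u r * v r * (γ * s r ^ 2 + 4 * α * v r ^ 2) / y r)
      (nhdsWithin 0 (Set.Ioi 0)) (nhds 0))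
    (hΦinf : Filter.Tendsto
      (fun r => r * u r * v r * (γ * s r ^ 2 + 4 * α * v r ^ 2) / y r)
      Filter.atTop (nhds 0))
    (hΦ' : MeasureTheory.IntegrableOn
      (deriv (fun r => r * u r * v r * (γ * s r ^ 2 + 4 * α * v r ^ 2) / y r))
      (Set.Ioi 0))
    (hint1 : MeasureTheory.IntegrableOn
      (fun r => 2 * r * ((1 + (v r ^ 2 + γ / 4 * s r ^ 2) / y r ^ 2)
          * (γ * s r ^ 2 + 4 * α * v r ^ 2) + 4 * α * v r ^ 2) * u r ^ 2)
      (Set.Ioi 0))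
    (hv0 : Filter.Tendsto v (nhdsWithin 0 (Set.Ioi 0)) (nhds 0))
    (hvinf : Filter.Tendsto v Filter.atTop (nhds 0)) :
    ∀ r : ℝ, 0 < r → u r = 0 ∧ v r = 0 := by
  obtain ⟨hγpos, hγle⟩ := hγ
  -- the flux function and the integrand
  set Φ : ℝ → ℝ :=
    fun r => r * u r * v r * (γ * s r ^ 2 + 4 * α * v r ^ 2) / y r with hΦdef
  set J : ℝ → ℝ :=
    fun r => 2 * r * ((1 + (v r ^ 2 + γ / 4 * s r ^ 2) / y r ^ 2)
      * (γ * s r ^ 2 + 4 * α * v r ^ 2) + 4 * α * v r ^ 2) * u r ^ 2 with hJdef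
  -- Step 1: Φ' = -J on (0,∞)
  have hΦderiv : ∀ r ∈ Set.Ioi (0:ℝ), HasDerivAt Φ (-(J r)) r := by
    intro r hr
    have hrpos : (0:ℝ) < r := hr
    have hyne : y r ≠ 0 := ne_of_gt (hypos r hrpos)
    have hdiv : HasDerivAt (fun t => v t / y t)
        ((v' r * y r - v r * y' r) / y r ^ 2) r := (hv r hr).div (hy r hr) hyne
    have hprod := (hUd r hr).mul hdiv
    have hfun : Φ = fun t => (t * u t * (γ * s t ^ 2 + 4 * α * v t ^ 2)) * (v t / y t) := by
      funext t
      simp only [hΦdef]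
      ring
    rw [hfun]
    refine hprod.congr_deriv ?_
    have e1 : U' r = -(2 * r * (4 * α * y r * u r ^ 2) * v r) := by
      linarith [hI r hr]
    have e2 : v' r * y r - v r * y' r
        = -((2 * y r ^ 2 + γ / 2 * s r ^ 2 + 2 * v r ^ 2) * u r) := by
      linarith [hU r hr]
    simp only [hJdef]
    rw [e1, e2]
    field_simp
    ring
  -- Step 2: J ≥ 0, so Φ is antitone
  have hJnonneg : ∀ r ∈ Set.Ioi (0:ℝ), 0 ≤ J r := by
    intro r hr
    have hrpos : (0:ℝ) < r := hr
    have h1 : 0 < γ * s r ^ 2 := mul_pos hγpos (pow_pos (hspos r hrpos) 2)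
    have h2 : 0 ≤ (v r ^ 2 + γ / 4 * s r ^ 2) / y r ^ 2 :=
      div_nonneg (by nlinarith [sq_nonneg (v r)]) (sq_nonneg _)
    have h3 : 0 ≤ 4 * α * v r ^ 2 := by positivity
    have h4 : 0 ≤ γ * s r ^ 2 + 4 * α * v r ^ 2 := by linarith
    simp only [hJdef]
    have h5 : 0 ≤ (1 + (v r ^ 2 + γ / 4 * s r ^ 2) / y r ^ 2)
        * (γ * s r ^ 2 + 4 * α * v r ^ 2) + 4 * α * v r ^ 2 := by
      nlinarith [mul_nonneg h2 h4]
    positivity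
  have hΦanti : AntitoneOn Φ (Set.Ioi (0:ℝ)) := by
    apply antitoneOn_of_deriv_nonpos (convex_Ioi 0)
    · exact fun t ht => ((hΦderiv t ht).continuousAt).continuousWithinAt
    · rw [interior_Ioi]
      exact fun t ht => ((hΦderiv t ht).differentiableAt).differentiableWithinAt
    · rw [interior_Ioi]
      intro x hx
      rw [(hΦderiv x hx).deriv]
      linarith [hJnonneg x hx]
  -- Step 3: Φ ≡ 0 on (0,∞)
  have hΦzero : ∀ r ∈ Set.Ioi (0:ℝ), Φ r = 0 := by
    intro r hr
    have hrpos : (0:ℝ) < r := hr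
    have hle1 : Φ r ≤ 0 := by
      refine ge_of_tendsto hΦ0 ?_
      filter_upwards [Ioo_mem_nhdsGT_of_mem (⟨le_refl 0, hrpos⟩ : (0:ℝ) ∈ Ico (0:ℝ) r)] with t ht
      exact hΦanti ht.1 hr ht.2.le
    have hle2 : 0 ≤ Φ r := by
      refine le_of_tendsto hΦinf ?_
      filter_upwards [eventually_ge_atTop r] with t ht
      exact hΦanti hr (hrpos.trans_le ht) ht
    linarith
  -- Step 4: J ≡ 0 pointwise, hence u ≡ 0
  have huzero : ∀ r ∈ Set.Ioi (0:ℝ), u r = 0 := by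
    intro r hr
    have hrpos : (0:ℝ) < r := hr
    have hconst : HasDerivAt Φ 0 r := by
      refine (hasDerivAt_const r (0:ℝ)).congr_of_eventuallyEq ?_
      filter_upwards [isOpen_Ioi.mem_nhds hr] with t ht
      exact hΦzero t ht
    have hJ0 : -(J r) = 0 := (hΦderiv r hr).unique hconst
    have h1 : 0 < γ * s r ^ 2 := mul_pos hγpos (pow_pos (hspos r hrpos) 2)
    have h2 : 0 ≤ (v r ^ 2 + γ / 4 * s r ^ 2) / y r ^ 2 :=
      div_nonneg (by nlinarith [sq_nonneg (v r)]) (sq_nonneg _)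
    have h3 : 0 ≤ 4 * α * v r ^ 2 := by positivity
    have hB : 0 < (1 + (v r ^ 2 + γ / 4 * s r ^ 2) / y r ^ 2)
        * (γ * s r ^ 2 + 4 * α * v r ^ 2) + 4 * α * v r ^ 2 := by
      nlinarith [mul_nonneg h2 (by linarith : (0:ℝ) ≤ γ * s r ^ 2 + 4 * α * v r ^ 2)]
    have hJr : J r = 0 := by linarith
    simp only [hJdef] at hJr
    have h2rB : 0 < 2 * r * ((1 + (v r ^ 2 + γ / 4 * s r ^ 2) / y r ^ 2)
        * (γ * s r ^ 2 + 4 * α * v r ^ 2) + 4 * α * v r ^ 2) :=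
      mul_pos (by linarith) hB
    have hu2 : u r ^ 2 = 0 := by
      rcases mul_eq_zero.mp hJr with h | h
      · exact absurd h (ne_of_gt h2rB)
      · exact h
    exact pow_eq_zero_iff (by norm_num : (2:ℕ) ≠ 0) |>.mp hu2
  -- Step 5: u' ≡ 0 as well
  have hu'zero : ∀ r ∈ Set.Ioi (0:ℝ), u' r = 0 := by
    intro r hr
    have hconst : HasDerivAt u 0 r := by
      refine (hasDerivAt_const r (0:ℝ)).congr_of_eventuallyEq ?_
      filter_upwards [isOpen_Ioi.mem_nhds hr] with t ht
      exact huzero t ht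
    exact (hu r hr).unique hconst
  -- Step 6: the reduced v-equation
  set g : ℝ → ℝ := fun r => 1 / r ^ 2 + γ * s r ^ 2 with hgdef
  have hgpos : ∀ r ∈ Set.Ioi (0:ℝ), 0 < g r := by
    intro r hr
    have hrpos : (0:ℝ) < r := hr
    have h1 : 0 < γ * s r ^ 2 := mul_pos hγpos (pow_pos (hspos r hrpos) 2)
    have h2 : 0 < 1 / r ^ 2 := by positivity
    simp only [hgdef]; linarith
  have hveq : ∀ r ∈ Set.Ioi (0:ℝ), v'' r + v' r / r - v r * g r = 0 := by
    intro r hr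
    have hrpos : (0:ℝ) < r := hr
    have h := hV r hr
    rw [huzero r hr, hu'zero r hr] at h
    have hrne : r ≠ 0 := ne_of_gt hrpos
    simp only [hgdef]
    linear_combination h
  -- Step 7: maximum principle on v and -v
  have hvle : ∀ r ∈ Set.Ioi (0:ℝ), v r ≤ 0 :=
    aux_nonpos g v v' v'' hv hv' hgpos hveq hv0 hvinf
  have hvge : ∀ r ∈ Set.Ioi (0:ℝ), -(v r) ≤ 0 := by
    refine aux_nonpos g (fun t => -(v t)) (fun t => -(v' t)) (fun t => -(v'' t))
      (fun r hr => (hv r hr).neg) (fun r hr => (hv' r hr).neg) hgpos ?_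
      (by simpa using hv0.neg) (by simpa using hvinf.neg)
    intro r hr
    linear_combination (-1 : ℝ) * hveq r hr
  intro r hr
  exact ⟨huzero r hr, le_antisymm (hvle r hr) (by linarith [hvge r hr])⟩
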